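/- arXiv:math/0408434 — 2 statements merged into one kernel-verified Lean document; each statement's English description precedes it below -/
import Mathlib

section
/- With u and v the self-adjoint unitary permutation matrices with nonzero entries at positions (1,1),(2,4),(3,3),(4,2) and (1,1),(2,2),(3,4),(4,3) respectively, the subalgebras D_{12} = u(M_2⊗I_2)u and D_{23} = v(M_2⊗I_2)v of M_4(ℂ) satisfy D_{12} ∩ D_{23} = ℂ·I_4. -/
open Matrix

noncomputable section

/-- Identification `M₂(ℂ) ⊗ M₂(ℂ) ≅ M₄(ℂ)`: the Kronecker (block) tensor product,
with index `(i₁,i₂) ↦ 2·i₁+i₂`. -/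
def tens (a b : Matrix (Fin 2) (Fin 2) ℂ) : Matrix (Fin 4) (Fin 4) ℂ :=
  Matrix.reindex finProdFinEquiv finProdFinEquiv (Matrix.kroneckerMap (· * ·) a b)

/-- The permutation matrix with 1's at positions (1,1),(2,4),(3,3),(4,2). -/
def uMat : Matrix (Fin 4) (Fin 4) ℂ := !![1,0,0,0; 0,0,0,1; 0,0,1,0; 0,1,0,0]

/-- The permutation matrix with 1's at positions (1,1),(2,2),(3,4),(4,3). -/
def vMat : Matrix (Fin 4) (Fin 4) ℂ := !![1,0,0,0; 0,1,0,0; 0,0,0,1; 0,0,1,0]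

/-- `e_u(i,j) = u (e(i,j) ⊗ I₂) u`. -/
def eU (i j : Fin 2) : Matrix (Fin 4) (Fin 4) ℂ :=
  uMat * tens (Matrix.single i j 1) 1 * uMat

/-- `e_v(i,j) = v (e(i,j) ⊗ I₂) v`. -/
def eV (i j : Fin 2) : Matrix (Fin 4) (Fin 4) ℂ :=
  vMat * tens (Matrix.single i j 1) 1 * vMat

/-- `e_0(i,j) = I₂ ⊗ e(i,j)`. -/
def e0 (i j : Fin 2) : Matrix (Fin 4) (Fin 4) ℂ :=
  tens 1 (Matrix.single i j 1)

end

lemma tens_explicit (a b : Matrix (Fin 2) (Fin 2) ℂ) : tens a b =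
  !![a 0 0*b 0 0, a 0 0*b 0 1, a 0 1*b 0 0, a 0 1*b 0 1;
     a 0 0*b 1 0, a 0 0*b 1 1, a 0 1*b 1 0, a 0 1*b 1 1;
     a 1 0*b 0 0, a 1 0*b 0 1, a 1 1*b 0 0, a 1 1*b 0 1;
     a 1 0*b 1 0, a 1 0*b 1 1, a 1 1*b 1 0, a 1 1*b 1 1] := by
  ext i j
  fin_cases i <;> fin_cases j <;> simp [tens, finProdFinEquiv, Fin.divNat, Fin.modNat] <;> rfl

lemma uconj (a : Matrix (Fin 2) (Fin 2) ℂ) : uMat * tens a 1 * uMat =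
    !![a 0 0, 0, a 0 1, 0; 0, a 1 1, 0, a 1 0; a 1 0, 0, a 1 1, 0; 0, a 0 1, 0, a 0 0] := by
  rw [tens_explicit]
  ext i j
  fin_cases i <;> fin_cases j <;>
    simp [uMat, Matrix.mul_apply, Fin.sum_univ_four, Matrix.one_apply, Matrix.vecHead,
      Matrix.vecTail]

lemma vconj (b : Matrix (Fin 2) (Fin 2) ℂ) : vMat * tens b 1 * vMat =
    !![b 0 0, 0, 0, b 0 1; 0, b 0 0, b 0 1, 0; 0, b 1 0, b 1 1, 0; b 1 0, 0, 0, b 1 1] := by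
  rw [tens_explicit]
  ext i j
  fin_cases i <;> fin_cases j <;>
    simp [vMat, Matrix.mul_apply, Fin.sum_univ_four, Matrix.one_apply, Matrix.vecHead,
      Matrix.vecTail]

/-- `D₁₂ ∩ D₂₃ = ℂ·I₄` where `D₁₂ = u(M₂⊗I₂)u` and `D₂₃ = v(M₂⊗I₂)v`. -/
theorem stmt3 :
    {x : Matrix (Fin 4) (Fin 4) ℂ | ∃ a : Matrix (Fin 2) (Fin 2) ℂ, x = uMat * tens a 1 * uMat} ∩
      {x : Matrix (Fin 4) (Fin 4) ℂ | ∃ b : Matrix (Fin 2) (Fin 2) ℂ, x = vMat * tens b 1 * vMat}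
    = {x : Matrix (Fin 4) (Fin 4) ℂ | ∃ c : ℂ, x = c • (1 : Matrix (Fin 4) (Fin 4) ℂ)} := by
  ext x
  constructor
  · rintro ⟨⟨a, ha⟩, ⟨b, hb⟩⟩
    rw [uconj] at ha
    rw [vconj] at hb
    have h : (!![a 0 0, 0, a 0 1, 0; 0, a 1 1, 0, a 1 0; a 1 0, 0, a 1 1, 0; 0, a 0 1, 0, a 0 0]
        : Matrix (Fin 4) (Fin 4) ℂ)
        = !![b 0 0, 0, 0, b 0 1; 0, b 0 0, b 0 1, 0; 0, b 1 0, b 1 1, 0; b 1 0, 0, 0, b 1 1] :=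
      ha ▸ hb
    have h02 : a 0 1 = 0 := by simpa using congrFun (congrFun h 0) 2
    have h20 : a 1 0 = 0 := by simpa using congrFun (congrFun h 2) 0
    have h00 : a 0 0 = b 0 0 := by simpa using congrFun (congrFun h 0) 0
    have h11 : a 1 1 = b 0 0 := by simpa using congrFun (congrFun h 1) 1
    refine ⟨a 0 0, ?_⟩
    rw [ha]
    ext i j
    fin_cases i <;> fin_cases j <;>
      simp [h02, h20, h00, h11.trans h00.symm, Matrix.one_apply, Matrix.vecHead, Matrix.vecTail]
  · rintro ⟨c, rfl⟩
    constructor <;> refine ⟨c • 1, ?_⟩ <;> [rw [uconj]; rw [vconj]] <;> ext i j <;>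
      fin_cases i <;> fin_cases j <;>
      simp [Matrix.one_apply, Matrix.vecHead, Matrix.vecTail]
end

section
/- Let E_0 : M_2⊗M_2 → I_2⊗M_2 be defined by E_0(a⊗b) = τ_2(a)(I_2⊗b), where τ_2 is the normalized trace on M_2(ℂ), and let E_u(x) = u·E_0'(uxu)·u where E_0'(a⊗b)=τ_2(b)(a⊗I_2). Then E_u(I_2⊗b) = τ_2(b)·I_4 for all b ∈ M_2(ℂ); that is, the square formed by u(M_2⊗I_2)u ⊂ M_2⊗M_2 above ℂ ⊂ I_2⊗M_2 is a commuting square. -/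
open Matrix

noncomputable section

/-- The trace-preserving conditional expectation of `M₄(ℂ) = M₂⊗M₂` onto `M₂⊗I₂`,
given on elementary tensors by `E₀'(a⊗b) = τ₂(b)·(a⊗I₂)` (partial normalized trace
over the second factor). -/
def E0' (x : Matrix (Fin 4) (Fin 4) ℂ) : Matrix (Fin 4) (Fin 4) ℂ :=
  tens (Matrix.of fun i j : Fin 2 =>
    (x ((finProdFinEquiv ((i, 0) : Fin 2 × Fin 2) : Fin 4)) ((finProdFinEquiv ((j, 0) : Fin 2 × Fin 2) : Fin 4)) +
      x ((finProdFinEquiv ((i, 1) : Fin 2 × Fin 2) : Fin 4)) ((finProdFinEquiv ((j, 1) : Fin 2 × Fin 2) : Fin 4))) / 2) 1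

/-- The conditional expectation of `M₄(ℂ)` onto `u(M₂⊗I₂)u`:
`E_u(x) = u·E₀'(uxu)·u`. -/
def Eu (x : Matrix (Fin 4) (Fin 4) ℂ) : Matrix (Fin 4) (Fin 4) ℂ :=
  uMat * E0' (uMat * x * uMat) * uMat

end


lemma tens_eq (a b : Matrix (Fin 2) (Fin 2) ℂ) :
    tens a b = !![a 0 0 * b 0 0, a 0 0 * b 0 1, a 0 1 * b 0 0, a 0 1 * b 0 1;
                  a 0 0 * b 1 0, a 0 0 * b 1 1, a 0 1 * b 1 0, a 0 1 * b 1 1;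
                  a 1 0 * b 0 0, a 1 0 * b 0 1, a 1 1 * b 0 0, a 1 1 * b 0 1;
                  a 1 0 * b 1 0, a 1 0 * b 1 1, a 1 1 * b 1 0, a 1 1 * b 1 1] := by
  ext i j
  fin_cases i <;> fin_cases j <;>
    simp [tens, Matrix.kroneckerMap] <;> rfl

lemma E0'_eq (x : Matrix (Fin 4) (Fin 4) ℂ) :
    E0' x = tens !![(x 0 0 + x 1 1)/2, (x 0 2 + x 1 3)/2;
                    (x 2 0 + x 3 1)/2, (x 2 2 + x 3 3)/2] 1 := by
  unfold E0'
  ext i j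
  fin_cases i <;> fin_cases j <;> rfl

lemma u_conj (b : Matrix (Fin 2) (Fin 2) ℂ) :
    uMat * tens 1 b * uMat =
      !![b 0 0, 0, 0, b 0 1;
         0, b 1 1, b 1 0, 0;
         0, b 0 1, b 0 0, 0;
         b 1 0, 0, 0, b 1 1] := by
  rw [tens_eq]
  ext i j
  fin_cases i <;> fin_cases j <;>
    simp [uMat, Matrix.mul_apply, Fin.sum_univ_four, Matrix.one_apply, Matrix.vecHead, Matrix.vecTail]

/-- `E_u(I₂⊗b) = τ₂(b)·I₄` for every `b ∈ M₂(ℂ)`: the square formed by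
`u(M₂⊗I₂)u ⊂ M₂⊗M₂` above `ℂ ⊂ I₂⊗M₂` is a commuting square. -/
theorem stmt5 :
    ∀ b : Matrix (Fin 2) (Fin 2) ℂ,
      Eu (tens 1 b) = (Matrix.trace b / 2) • (1 : Matrix (Fin 4) (Fin 4) ℂ) := by
  intro b
  rw [Eu, u_conj, E0'_eq, tens_eq]
  ext i j
  fin_cases i <;> fin_cases j <;>
    simp [uMat, Matrix.mul_apply, Fin.sum_univ_four, Matrix.one_apply,
      Matrix.trace_fin_two, Matrix.vecHead, Matrix.vecTail]
end
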